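/- Let P be a strong Feller Markov kernel on a Polish space X and suppose there exists n ≥ 1 such that P^n(x,A) > 0 for every x ∈ X and every nonempty open set A ⊂ X. Then P has at most one invariant probability measure and, if an invariant probability measure μ exists, it is equivalent (mutually absolutely continuous) to P^{n+1}(x,·) for every x ∈ X. -/

import Mathlib

open MeasureTheory ProbabilityTheory Filter
open scoped ENNReal

/-- A Markov kernel is *strong Feller* if it maps bounded measurable functions to
continuous functions. -/
def StrongFeller {X : Type*} [MeasurableSpace X] [TopologicalSpace X] (P : Kernel X X) : Prop :=
  ∀ f : X → ℝ, Measurable f → (∃ C, ∀ x, |f x| ≤ C) →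
    Continuous fun x => ∫ y, f y ∂(P x)

/-- A measure `μ` is invariant for the kernel `P` if `∫ P(x,·) μ(dx) = μ`. -/
def Invariant {X : Type*} [MeasurableSpace X] (P : Kernel X X) (μ : Measure X) : Prop :=
  μ.bind (fun x => P x) = μ

/-- `n`-step transition kernel: the `n`-fold composition of `P` with itself. -/
noncomputable def kpow {α : Type*} [MeasurableSpace α] (P : Kernel α α) : ℕ → Kernel α α
  | 0 => Kernel.id
  | n + 1 => P ∘ₖ kpow P n

section Aux
set_option linter.unusedSectionVars false
variable {X : Type*} [MeasurableSpace X]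

instance kpow_markov (P : Kernel X X) [IsMarkovKernel P] (m : ℕ) : IsMarkovKernel (kpow P m) := by
  induction m with
  | zero => rw [kpow]; infer_instance
  | succ k ih => rw [kpow]; infer_instance

lemma kpow_succ_apply' (P : Kernel X X) (m : ℕ) (x : X) {A : Set X} (hA : MeasurableSet A) :
    kpow P (m + 1) x A = ∫⁻ y, P y A ∂(kpow P m x) := by
  rw [kpow, Kernel.comp_apply' _ _ _ hA]

lemma bind_P_apply (P : Kernel X X) (ρ : Measure X) {A : Set X} (hA : MeasurableSet A) :
    ρ.bind (fun x => P x) A = ∫⁻ y, P y A ∂ρ :=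
  Measure.bind_apply hA (P.measurable.aemeasurable)

lemma bind_add_P (P : Kernel X X) (μ ν : Measure X) :
    (μ + ν).bind (fun y => P y) = μ.bind (fun y => P y) + ν.bind (fun y => P y) := by
  ext A hA
  rw [Measure.add_apply, bind_P_apply P _ hA, bind_P_apply P _ hA, bind_P_apply P _ hA,
    lintegral_add_measure]

lemma invariant_kpow {P : Kernel X X} {μ : Measure X} (h : Invariant P μ) (m : ℕ) :
    μ.bind (fun x => kpow P m x) = μ := by
  induction m with
  | zero =>
    simp only [kpow, Kernel.id_apply]
    exact Measure.bind_dirac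
  | succ k ih =>
    have : (fun x => kpow P (k+1) x) = fun x => (kpow P k x).bind (fun y => P y) := by
      funext x
      rw [kpow, Kernel.comp_apply]
    rw [this, ← Measure.bind_bind (kpow P k).measurable.aemeasurable P.measurable.aemeasurable, ih, h]

set_option linter.unusedSectionVars false

section Top
variable [TopologicalSpace X] [BorelSpace X]

lemma cont_P {P : Kernel X X} [IsMarkovKernel P] (hP : StrongFeller P)
    {A : Set X} (hA : MeasurableSet A) :
    Continuous fun y => (P y A).toReal := by
  have h := hP (A.indicator 1) (measurable_one.indicator hA)
    ⟨1, fun x => by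
      by_cases hx : x ∈ A <;> simp [Set.indicator_apply, hx]⟩
  have heq : (fun x => ∫ y, A.indicator 1 y ∂(P x)) = fun x => (P x A).toReal := by
    funext x
    exact integral_indicator_one hA
  rwa [heq] at h

/-- If `P(·, A)` vanishes a.e. with respect to a measure of full support, it vanishes
everywhere. -/
lemma P_eq_zero_everywhere {P : Kernel X X} [IsMarkovKernel P] (hP : StrongFeller P)
    {ρ : Measure X} (hρ : ∀ U : Set X, IsOpen U → U.Nonempty → 0 < ρ U)
    {A : Set X} (hA : MeasurableSet A) (h0 : ∀ᵐ y ∂ρ, P y A = 0) :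
    ∀ y, P y A = 0 := by
  set g : X → ℝ := fun y => (P y A).toReal with hg
  have hgc : Continuous g := cont_P hP hA
  have hU : IsOpen (g ⁻¹' Set.Ioi 0) := (isOpen_Ioi).preimage hgc
  have hUe : g ⁻¹' Set.Ioi 0 = ∅ := by
    by_contra h
    have hne : (g ⁻¹' Set.Ioi 0).Nonempty := Set.nonempty_iff_ne_empty.2 h
    have hpos := hρ _ hU hne
    have hsub : g ⁻¹' Set.Ioi 0 ⊆ {y | ¬ P y A = 0} := by
      intro y hy
      simp only [Set.mem_setOf_eq]
      intro hzero
      simp [hg, hzero] at hy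
    have : ρ (g ⁻¹' Set.Ioi 0) = 0 := measure_mono_null hsub h0
    exact absurd this hpos.ne'
  intro y
  have hgy : g y ≤ 0 := by
    by_contra h
    have hyU : y ∈ g ⁻¹' Set.Ioi 0 := by simpa using lt_of_not_ge h
    rw [hUe] at hyU
    exact hyU.elim
  have : g y = 0 := le_antisymm hgy ENNReal.toReal_nonneg
  exact (ENNReal.toReal_eq_zero_iff _).1 this |>.resolve_right (measure_ne_top _ _)

end Top

section Main
variable [TopologicalSpace X] [BorelSpace X]

lemma invariant_full_support {P : Kernel X X} [IsMarkovKernel P]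
    {μ : Measure X} [IsProbabilityMeasure μ] (hμ : Invariant P μ)
    (n : ℕ) (hirr : ∀ x : X, ∀ A : Set X, IsOpen A → A.Nonempty → 0 < kpow P n x A) :
    ∀ U : Set X, IsOpen U → U.Nonempty → 0 < μ U := by
  intro U hU hUe
  have h1 : μ U = ∫⁻ x, kpow P n x U ∂μ := by
    conv_lhs => rw [← invariant_kpow hμ n]
    exact Measure.bind_apply hU.measurableSet (kpow P n).measurable.aemeasurable
  rw [h1, lintegral_pos_iff_support (Kernel.measurable_coe _ hU.measurableSet)]
  have : Function.support (fun x => kpow P n x U) = Set.univ := by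
    ext x
    simp only [Function.mem_support, Set.mem_univ, iff_true]
    exact (hirr x U hU hUe).ne'
  rw [this]
  simp

lemma equiv_aux {P : Kernel X X} [IsMarkovKernel P] (hP : StrongFeller P)
    (n : ℕ) (hirr : ∀ x : X, ∀ A : Set X, IsOpen A → A.Nonempty → 0 < kpow P n x A)
    {μ : Measure X} [IsProbabilityMeasure μ] (hμ : Invariant P μ) (x : X) :
    μ ≪ kpow P (n + 1) x ∧ kpow P (n + 1) x ≪ μ := by
  constructor
  · refine Measure.AbsolutelyContinuous.mk fun A hA h0 => ?_
    rw [kpow_succ_apply' P n x hA] at h0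
    have hae : ∀ᵐ y ∂(kpow P n x), P y A = 0 := by
      have := (lintegral_eq_zero_iff (P.measurable_coe hA)).1 h0
      filter_upwards [this] with y hy using hy
    have hall : ∀ y, P y A = 0 := P_eq_zero_everywhere hP (hirr x) hA hae
    calc μ A = μ.bind (fun x => P x) A := by rw [hμ]
      _ = ∫⁻ y, P y A ∂μ := bind_P_apply P μ hA
      _ = 0 := by simp [hall]
  · refine Measure.AbsolutelyContinuous.mk fun A hA h0 => ?_
    have h1 : ∫⁻ y, P y A ∂μ = 0 := by
      rw [← bind_P_apply P μ hA, hμ, h0]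
    have hae : ∀ᵐ y ∂μ, P y A = 0 := by
      have := (lintegral_eq_zero_iff (P.measurable_coe hA)).1 h1
      filter_upwards [this] with y hy using hy
    have hall : ∀ y, P y A = 0 :=
      P_eq_zero_everywhere hP (invariant_full_support hμ n hirr) hA hae
    rw [kpow_succ_apply' P n x hA]
    simp [hall]

end Main

lemma measure_eq_of_le_of_univ_eq {μ ν : Measure X} [IsFiniteMeasure μ] [IsFiniteMeasure ν]
    (hle : μ ≤ ν) (huniv : μ Set.univ = ν Set.univ) : μ = ν := by
  ext A hA
  have h1 : μ A ≤ ν A := hle A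
  have h2 : μ Aᶜ ≤ ν Aᶜ := hle Aᶜ
  have h3 : μ A + μ Aᶜ = ν A + ν Aᶜ := by
    rw [measure_add_measure_compl hA, measure_add_measure_compl hA, huniv]
  by_contra hne
  have hlt : μ A < ν A := lt_of_le_of_ne h1 hne
  have : μ A + μ Aᶜ < ν A + ν Aᶜ :=
    ENNReal.add_lt_add_of_lt_of_le (measure_ne_top μ Aᶜ) hlt h2
  exact absurd h3 this.ne

lemma bind_P_univ (P : Kernel X X) [IsMarkovKernel P] (ρ : Measure X) :
    ρ.bind (fun x => P x) Set.univ = ρ Set.univ := by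
  rw [bind_P_apply P ρ MeasurableSet.univ]
  simp

/-- Core combinatorial lemma for uniqueness: if `γ + ρ₁ = δ + ρ₂` and the same identity
holds after one application of the kernel to `γ` and `δ`, and `γ`, `δ` are concentrated on
complementary sets, then `γ` is invariant. -/
lemma invariant_pos_part (P : Kernel X X) [IsMarkovKernel P]
    {γ δ ρ₁ ρ₂ : Measure X} [IsFiniteMeasure γ] [IsFiniteMeasure δ]
    [IsFiniteMeasure ρ₁] [IsFiniteMeasure ρ₂]
    {t : Set X} (ht : MeasurableSet t) (hγt : γ tᶜ = 0) (hδt : δ t = 0)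
    (heq : γ + ρ₁ = δ + ρ₂)
    (heq' : γ.bind (fun y => P y) + ρ₁ = δ.bind (fun y => P y) + ρ₂) :
    Invariant P γ := by
  set γ' := γ.bind (fun y => P y) with hγ'
  set δ' := δ.bind (fun y => P y) with hδ'
  have hmass : γ' Set.univ = γ Set.univ := bind_P_univ P γ
  -- step 2 : for measurable A ⊆ t, γ A ≤ γ' A
  have step2 : ∀ A : Set X, MeasurableSet A → A ⊆ t → γ A ≤ γ' A := by
    intro A hA hAt
    have hδA : δ A = 0 := measure_mono_null hAt hδt
    have e1 : γ A + ρ₁ A = ρ₂ A := by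
      have := congrArg (fun m : Measure X => m A) heq
      simpa [Measure.add_apply, hδA] using this
    have e2 : γ' A + ρ₁ A = δ' A + ρ₂ A := by
      have := congrArg (fun m : Measure X => m A) heq'
      simpa [Measure.add_apply] using this
    have : γ A + ρ₁ A ≤ γ' A + ρ₁ A := by
      rw [e1, e2]
      exact le_add_self
    exact (ENNReal.add_le_add_iff_right (measure_ne_top ρ₁ A)).1 this
  -- step 3 : γ' t = γ t and γ' tᶜ = 0
  have hγt' : γ Set.univ = γ t := by
    rw [← measure_add_measure_compl ht, hγt, add_zero]
  have hle_t : γ t ≤ γ' t := step2 t ht le_rfl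
  have hge_t : γ' t ≤ γ t := by
    calc γ' t ≤ γ' Set.univ := measure_mono (Set.subset_univ _)
      _ = γ Set.univ := hmass
      _ = γ t := hγt'
  have heq_t : γ' t = γ t := le_antisymm hge_t hle_t
  have hγ't : γ' tᶜ = 0 := by
    have h : γ' t + γ' tᶜ = γ' t + 0 := by
      rw [measure_add_measure_compl ht, hmass, hγt', heq_t, add_zero]
    have hfin : γ' t ≠ ⊤ := by rw [heq_t]; exact measure_ne_top γ t
    exact (ENNReal.add_right_inj hfin).1 h
  -- step 4 : γ' A ≥ γ A for all measurable A
  have step4 : ∀ A : Set X, MeasurableSet A → γ A ≤ γ' A := by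
    intro A hA
    have h1 : γ A = γ (A ∩ t) := by
      have : γ (A \ t) = 0 := measure_mono_null (Set.diff_subset_compl A t) hγt
      rw [← measure_inter_add_diff A ht, this, add_zero]
    have h2 : γ' (A ∩ t) ≤ γ' A := measure_mono Set.inter_subset_left
    calc γ A = γ (A ∩ t) := h1
      _ ≤ γ' (A ∩ t) := step2 _ (hA.inter ht) Set.inter_subset_right
      _ ≤ γ' A := h2
  -- conclude: γ' = γ
  have : Invariant P γ := by
    unfold Invariant
    ext A hA
    have h1 : γ A ≤ γ' A := step4 A hA
    have h2 : γ Aᶜ ≤ γ' Aᶜ := step4 Aᶜ hA.compl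
    have h3 : γ' A + γ' Aᶜ = γ A + γ Aᶜ := by
      rw [measure_add_measure_compl hA, measure_add_measure_compl hA, hmass]
    by_contra hne
    have hfinc : γ Aᶜ ≠ ⊤ := measure_ne_top γ Aᶜ
    have hlt : γ A < γ' A := lt_of_le_of_ne h1 (by exact fun h => hne h.symm)
    have : γ A + γ Aᶜ < γ' A + γ' Aᶜ :=
      ENNReal.add_lt_add_of_lt_of_le hfinc hlt h2
    exact absurd h3.symm this.ne
  exact this

section Final
variable [TopologicalSpace X] [BorelSpace X]

lemma uniqueness_aux {P : Kernel X X} [IsMarkovKernel P] (hP : StrongFeller P)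
    (n : ℕ) (hirr : ∀ x : X, ∀ A : Set X, IsOpen A → A.Nonempty → 0 < kpow P n x A)
    (μ ν : Measure X) (hμp : IsProbabilityMeasure μ) (hνp : IsProbabilityMeasure ν)
    (hμ : Invariant P μ) (hν : Invariant P ν) : μ = ν := by
  -- X is nonempty
  have hX : Nonempty X := by
    by_contra h
    rw [not_nonempty_iff] at h
    have : μ Set.univ = 1 := hμp.measure_univ
    rw [Set.univ_eq_empty_iff.2 h, measure_empty] at this
    exact zero_ne_one this
  obtain ⟨x⟩ := hX
  -- Hahn decomposition for μ vs ν
  obtain ⟨s, hs, h₁, h₂⟩ := hahn_decomposition (μ := μ) (ν := ν)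
  set κ : Measure X := μ.restrict s + ν.restrict sᶜ with hκ
  have hκ_apply : ∀ A : Set X, MeasurableSet A → κ A = μ (A ∩ s) + ν (A ∩ sᶜ) := by
    intro A hA
    rw [hκ, Measure.add_apply, Measure.restrict_apply hA, Measure.restrict_apply hA]
  have hμκ : μ ≤ κ := by
    rw [Measure.le_iff]
    intro A hA
    rw [hκ_apply A hA, ← measure_inter_add_diff A hs, Set.diff_eq]
    exact add_le_add le_rfl (h₂ _ (hA.inter hs.compl) Set.inter_subset_right)
  have hνκ : ν ≤ κ := by
    rw [Measure.le_iff]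
    intro A hA
    rw [hκ_apply A hA, ← measure_inter_add_diff A hs, Set.diff_eq]
    exact add_le_add (h₁ _ (hA.inter hs) Set.inter_subset_right) le_rfl
  set α : Measure X := κ - ν with hα
  set β : Measure X := κ - μ with hβ
  have hαν : α + ν = κ := Measure.sub_add_cancel_of_le hνκ
  have hβμ : β + μ = κ := Measure.sub_add_cancel_of_le hμκ
  -- concentration of α and β
  have hκs : κ sᶜ = ν sᶜ := by
    rw [hκ_apply _ hs.compl]
    simp [Set.inter_comm]
  have hκs' : κ s = μ s := by
    rw [hκ_apply _ hs]
    simp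
  have hαsc : α sᶜ = 0 := by
    rw [hα, Measure.sub_apply hs.compl hνκ, hκs, tsub_self]
  have hβs : β s = 0 := by
    rw [hβ, Measure.sub_apply hs hμκ, hκs', tsub_self]
  -- the bind identity
  have hbind : α.bind (fun y => P y) + ν = β.bind (fun y => P y) + μ := by
    have h1 : (α + ν).bind (fun y => P y) = (β + μ).bind (fun y => P y) := by
      rw [hαν, hβμ]
    rw [bind_add_P, bind_add_P, hμ, hν] at h1
    exact h1
  -- α and β are invariant
  have hαinv : Invariant P α :=
    invariant_pos_part P hs hαsc hβs (hαν.trans hβμ.symm) hbind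
  have hβinv : Invariant P β := by
    refine invariant_pos_part P (t := sᶜ) hs.compl ?_ ?_ (hβμ.trans hαν.symm) hbind.symm
    · rw [compl_compl]; exact hβs
    · exact hαsc
  -- case analysis
  by_cases hα0 : α Set.univ = 0
  · have : α = 0 := Measure.measure_univ_eq_zero.1 hα0
    rw [this, zero_add] at hαν
    rw [← hαν] at hμκ
    exact measure_eq_of_le_of_univ_eq hμκ (by rw [hμp.measure_univ, hνp.measure_univ])
  by_cases hβ0 : β Set.univ = 0
  · have : β = 0 := Measure.measure_univ_eq_zero.1 hβ0
    rw [this, zero_add] at hβμ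
    rw [← hβμ] at hνκ
    exact (measure_eq_of_le_of_univ_eq hνκ (by rw [hμp.measure_univ, hνp.measure_univ])).symm
  -- both α and β are nonzero: contradiction via equivalence
  exfalso
  set a : ℝ≥0∞ := (α Set.univ)⁻¹ with ha
  set b : ℝ≥0∞ := (β Set.univ)⁻¹ with hb
  have hαfin : α Set.univ ≠ ⊤ := measure_ne_top α _
  have hβfin : β Set.univ ≠ ⊤ := measure_ne_top β _
  have hαP : IsProbabilityMeasure (a • α) :=
    ⟨by rw [Measure.smul_apply, smul_eq_mul, ha, ENNReal.inv_mul_cancel hα0 hαfin]⟩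
  have hβP : IsProbabilityMeasure (b • β) :=
    ⟨by rw [Measure.smul_apply, smul_eq_mul, hb, ENNReal.inv_mul_cancel hβ0 hβfin]⟩
  have hαinv' : Invariant P (a • α) := by
    unfold Invariant at hαinv ⊢
    rw [Measure.bind_smul, hαinv]
  have hβinv' : Invariant P (b • β) := by
    unfold Invariant at hβinv ⊢
    rw [Measure.bind_smul, hβinv]
  have h1 := equiv_aux hP n hirr hαinv' x
  have h2 := equiv_aux hP n hirr hβinv' x
  have habs : (a • α) ≪ (b • β) := h1.1.trans h2.2
  have hβs' : (b • β) s = 0 := by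
    rw [Measure.smul_apply, hβs, smul_eq_mul, mul_zero]
  have hαs0 : (a • α) s = 0 := habs hβs'
  have hαs : α s = α Set.univ := by
    rw [← measure_add_measure_compl hs, hαsc, add_zero]
  rw [Measure.smul_apply, smul_eq_mul, hαs, ha,
    ENNReal.inv_mul_cancel hα0 hαfin] at hαs0
  exact one_ne_zero hαs0

end Final

end Aux

/-- Let `P` be a strong Feller Markov kernel on a Polish space `X` such that for some `n ≥ 1`
one has `P^n(x,A) > 0` for every `x` and every nonempty open set `A`. Then `P` has at most one
invariant probability measure and, if an invariant probability measure exists, it is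
equivalent (mutually absolutely continuous) to `P^{n+1}(x,·)` for every `x ∈ X`. -/
theorem unique_invariant_of_strongFeller_irreducible
    {X : Type*} [TopologicalSpace X] [PolishSpace X] [MeasurableSpace X] [BorelSpace X]
    (P : Kernel X X) [IsMarkovKernel P] (hP : StrongFeller P)
    (n : ℕ) (hn : 1 ≤ n)
    (hirr : ∀ x : X, ∀ A : Set X, IsOpen A → A.Nonempty → 0 < kpow P n x A) :
    (∀ μ ν : Measure X, IsProbabilityMeasure μ → IsProbabilityMeasure ν →
      Invariant P μ → Invariant P ν → μ = ν) ∧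
    (∀ μ : Measure X, IsProbabilityMeasure μ → Invariant P μ →
      ∀ x : X, μ ≪ kpow P (n + 1) x ∧ kpow P (n + 1) x ≪ μ) := by
  constructor
  · intro μ ν hμp hνp hμ hν
    haveI := hμp; haveI := hνp
    exact uniqueness_aux hP n hirr μ ν hμp hνp hμ hν
  · intro μ hμp hμ x
    haveI := hμp
    exact equiv_aux hP n hirr hμ x
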